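/- Let c, f : ℝ → ℂ be continuous 2π-periodic functions, let λ ∈ ℝ, and set c₀ = (2π)⁻¹ ∫₀^{2π} c(t) dt. Assume λ c₀ ∈ ℤ. If there exists a differentiable 2π-periodic function u : ℝ → ℂ satisfying u′(t) + i λ c(t) u(t) = i f(t) for all t ∈ ℝ, then ∫₀^{2π} exp(i λ ∫₀ᵗ c(s) ds) f(t) dt = 0. -/

import Mathlib

open Real

/-- Necessity part of Lemma 2.4: in the resonant case `λ c₀ ∈ ℤ`, if the
Fourier-coefficient equation has a `2π`-periodic differentiable solution, then the
compatibility condition on `f` holds. -/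
theorem stmt3 (c f : ℝ → ℂ) (hc : Continuous c) (hf : Continuous f)
    (hcper : Function.Periodic c (2 * Real.pi)) (hfper : Function.Periodic f (2 * Real.pi))
    (lam : ℝ)
    (hres : ∃ m : ℤ,
      (lam : ℂ) * (((2 * Real.pi : ℝ) : ℂ)⁻¹ * ∫ t in (0:ℝ)..(2 * Real.pi), c t) = (m : ℂ))
    (u : ℝ → ℂ) (hu : Differentiable ℝ u) (huper : Function.Periodic u (2 * Real.pi))
    (hode : ∀ t : ℝ, deriv u t + Complex.I * (lam : ℂ) * c t * u t = Complex.I * f t) :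
    (∫ t in (0:ℝ)..(2 * Real.pi),
        Complex.exp (Complex.I * (lam : ℂ) * ∫ s in (0:ℝ)..t, c s) * f t) = 0 := by
  set E : ℝ → ℂ := fun t => Complex.exp (Complex.I * (lam : ℂ) * ∫ s in (0:ℝ)..t, c s) with hE
  have hInt : ∀ t : ℝ, HasDerivAt (fun t => ∫ s in (0:ℝ)..t, c s) (c t) t := fun t =>
    intervalIntegral.integral_hasDerivAt_right (hc.intervalIntegrable _ _)
      (hc.stronglyMeasurableAtFilter _ _) hc.continuousAt
  have hEcont : Continuous E := by
    apply Complex.continuous_exp.comp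
    exact (continuous_const.mul (intervalIntegral.continuous_primitive
      (fun a b => hc.intervalIntegrable a b) 0))
  have hEderiv : ∀ t : ℝ, HasDerivAt E (E t * (Complex.I * (lam : ℂ) * c t)) t := by
    intro t
    have h1 : HasDerivAt (fun t : ℝ => Complex.I * (lam : ℂ) * ∫ s in (0:ℝ)..t, c s)
        (Complex.I * (lam : ℂ) * c t) t := (hInt t).const_mul _
    simpa [hE, mul_comm] using h1.cexp
  have hg : ∀ t : ℝ, HasDerivAt (fun t => E t * u t) (E t * (Complex.I * f t)) t := by
    intro t
    have := (hEderiv t).mul (hu t).hasDerivAt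
    have heq : E t * (Complex.I * lam * c t) * u t + E t * deriv u t
        = E t * (Complex.I * f t) := by
      rw [← hode t]; ring
    rw [heq] at this; exact this
  have hintegrand : Continuous fun t => E t * (Complex.I * f t) :=
    hEcont.mul (continuous_const.mul hf)
  have key : (∫ t in (0:ℝ)..(2 * Real.pi), E t * (Complex.I * f t))
      = E (2 * Real.pi) * u (2 * Real.pi) - E 0 * u 0 :=
    intervalIntegral.integral_eq_sub_of_hasDerivAt (fun t _ => hg t)
      (hintegrand.intervalIntegrable _ _)
  obtain ⟨m, hm⟩ := hres
  have h2pi : ((2 * Real.pi : ℝ) : ℂ) ≠ 0 := by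
    simp [Real.pi_ne_zero, Real.pi_pos.ne']
  have hE2pi : E (2 * Real.pi) = 1 := by
    have hpi : (2 * (Real.pi : ℂ)) ≠ 0 := by
      simp [Real.pi_ne_zero]
    field_simp at hm
    have : Complex.I * (lam : ℂ) * ∫ s in (0:ℝ)..(2*Real.pi), c s
        = (m : ℂ) * (2 * Real.pi * Complex.I) := by
      push_cast at hm; linear_combination Complex.I * hm
    rw [hE]; simp only [this]
    exact Complex.exp_int_mul_two_pi_mul_I m
  have hE0 : E 0 = 1 := by simp [hE]
  have hu2pi : u (2 * Real.pi) = u 0 := by simpa using huper 0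
  have hzero : (∫ t in (0:ℝ)..(2 * Real.pi), E t * (Complex.I * f t)) = 0 := by
    rw [key, hE2pi, hE0, hu2pi]; ring
  have : Complex.I * (∫ t in (0:ℝ)..(2 * Real.pi), E t * f t) = 0 := by
    rw [← intervalIntegral.integral_const_mul]
    rw [← hzero]
    congr 1; ext t; ring
  have hI : (Complex.I : ℂ) ≠ 0 := Complex.I_ne_zero
  exact (mul_eq_zero.mp this).resolve_left hI
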